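/- arXiv:math/0605060 — 2 statements merged into one kernel-verified Lean document; each statement's English description precedes it below -/
import Mathlib

section
/- Stability of τ_M under single insertion: let β ∈ S_n, let 0 ≤ k ≤ n, and let β' = 1⧢_k β (shift β up by 1 and insert the letter 1 at position k+1). Then { τ_M(β')(i) : 0 ≤ i ≤ k } = { τ_M(β)(i) : 0 ≤ i ≤ k }. -/
open Finset

namespace Paper

/-- The word of `σ` at 0-based position `i`, with 0-based values (`0` outside range). -/
def wrd {n : ℕ} (σ : Equiv.Perm (Fin n)) (i : ℕ) : ℕ :=
  if h : i < n then (σ ⟨i, h⟩ : ℕ) else 0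

/-- The descent set of `σ`, in 1-based positions: `{ i ∈ {1,…,n-1} | σ(i) > σ(i+1) }`. -/
def Des {n : ℕ} (σ : Equiv.Perm (Fin n)) : Finset ℕ :=
  (Finset.Ioo 0 n).filter fun i => wrd σ i < wrd σ (i - 1)

/-- The major index: the sum of the (1-based) descent positions. -/
def maj {n : ℕ} (σ : Equiv.Perm (Fin n)) : ℕ := ∑ i ∈ Des σ, i

/-- The number of descents. -/
def des {n : ℕ} (σ : Equiv.Perm (Fin n)) : ℕ := (Des σ).card

/-- The number of inversions. -/
def inv {n : ℕ} (σ : Equiv.Perm (Fin n)) : ℕ :=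
  (Finset.univ.filter fun p : Fin n × Fin n => p.1 < p.2 ∧ σ p.2 < σ p.1).card

/-- The Lehmer code, as a function `ℕ → ℕ` (0-based index, zero outside `[0, n)`):
`Lc σ i = #{ j > i | σ(j) < σ(i) }`. -/
def Lc {n : ℕ} (σ : Equiv.Perm (Fin n)) (i : ℕ) : ℕ :=
  if h : i < n then (Finset.univ.filter fun j : Fin n => i < (j : ℕ) ∧ σ j < σ ⟨i, h⟩).card
  else 0

/-- The inversion code (invcode) is the Lehmer code of the inverse. -/
def Ic {n : ℕ} (σ : Equiv.Perm (Fin n)) : ℕ → ℕ := Lc σ⁻¹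

/-- The word of a permutation, with 1-based values. -/
def word {n : ℕ} (σ : Equiv.Perm (Fin n)) : List ℕ := List.ofFn fun i => (σ i : ℕ) + 1

/-- The major index of a word: the sum of the 1-based positions `t` with `w_t > w_{t+1}`. -/
def majL (l : List ℕ) : ℕ :=
  ∑ t ∈ Finset.range (l.length - 1), if l.getD (t + 1) 0 < l.getD t 0 then t + 1 else 0

/-- The major code, as a function `ℕ → ℕ` (0-based index `i`, i.e. paper's `m_{i+1}`):
`m_i = maj(σ^{(i)}) - maj(σ^{(i+1)})` where `σ^{(i)}` keeps only the letters `≥ i`. -/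
def Mc {n : ℕ} (σ : Equiv.Perm (Fin n)) (i : ℕ) : ℕ :=
  majL ((word σ).filter fun x => decide (i + 1 ≤ x)) -
    majL ((word σ).filter fun x => decide (i + 2 ≤ x))

/-- The saillance code, as a function `ℕ → ℕ` (0-based index `i`, i.e. about the letter of
0-based value `i`): the number of letters of `σ` that are `≥` the rightmost letter located to
the left of `i` and greater than `i` (0 if there is no such letter). -/
def Sc {n : ℕ} (σ : Equiv.Perm (Fin n)) (i : ℕ) : ℕ :=
  if h : i < n then
    let L := Finset.univ.filter fun j : Fin n => j < σ⁻¹ ⟨i, h⟩ ∧ (⟨i, h⟩ : Fin n) < σ j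
    if hL : L.Nonempty then n - (σ (L.max' hL) : ℕ) else 0
  else 0

/-- Sub-diagonal sequences, as functions `ℕ → ℕ` supported on `[0, n)` with
`c_i ≤ n - 1 - i` there (0-based; i.e. `0 ≤ c_i ≤ n - i` in 1-based indexing). -/
def SubDiag (n : ℕ) : Set (ℕ → ℕ) :=
  {c | (∀ i, i < n → c i + i < n) ∧ ∀ i, n ≤ i → c i = 0}

/-- The permutation `τ_M(β)` of `{0,…,n}`: `τ_M(β)(i) = des(β) - j` if `i` is the `j`-th
descent of `β`, and `τ_M(β)(i) = des(β) + j - 1` if `i` is the `j`-th rise (position `0`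
counting as a rise). -/
def tauM {n : ℕ} (β : Equiv.Perm (Fin n)) (i : ℕ) : ℕ :=
  if i ∈ Des β then des β - ((Des β).filter fun d => d ≤ i).card
  else des β + ((Finset.range (i + 1)).filter fun r => r ∉ Des β).card - 1

/-- The permutation `τ_S(β)` of `{0,…,n}`: `τ_S(β)(0) = 0` and `τ_S(β)(i) = n + 1 - β(i)`
(1-based values) for `1 ≤ i ≤ n`. -/
def tauS {n : ℕ} (β : Equiv.Perm (Fin n)) (i : ℕ) : ℕ :=
  if h : 1 ≤ i ∧ i ≤ n then n - (β ⟨i - 1, by omega⟩ : ℕ) else 0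

/-- The complete homogeneous symmetric polynomial `h_k(X_m)` in the variables
`x_0, …, x_m`. -/
noncomputable def hpoly (k m : ℕ) : MvPolynomial ℕ ℤ :=
  ∑ f ∈ Finset.univ.filter (fun f : Fin k → Fin (m + 1) => ∀ a b : Fin k, a ≤ b → f a ≤ f b),
    ∏ t : Fin k, MvPolynomial.X ((f t : ℕ))

/-- The (proper) descent set of a composition `I = (i_1,…,i_r)`:
`{i_1, i_1+i_2, …, i_1+⋯+i_{r-1}}`. -/
def DesComp (I : List ℕ) : Finset ℕ :=
  (Finset.range (I.length - 1)).image fun k => (I.take (k + 1)).sum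

end Paper

namespace TauMAux

/-- Number of descents `≤ i`. -/
def cD (D : Finset ℕ) (i : ℕ) : ℕ := (D.filter fun d => d ≤ i).card

/-- Number of rises `≤ i` (i.e. positions in `[0,i]` not in `D`). -/
def rD (D : Finset ℕ) (i : ℕ) : ℕ := ((Finset.range (i + 1)).filter fun x => x ∉ D).card

lemma tauM_eq {n : ℕ} (σ : Equiv.Perm (Fin n)) (i : ℕ) :
    Paper.tauM σ i =
      if i ∈ Paper.Des σ then (Paper.Des σ).card - cD (Paper.Des σ) i
      else (Paper.Des σ).card + rD (Paper.Des σ) i - 1 := rfl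

lemma cD_le_card (D : Finset ℕ) (i : ℕ) : cD D i ≤ D.card := Finset.card_filter_le _ _

lemma one_le_cD {D : Finset ℕ} {i : ℕ} (h : i ∈ D) : 1 ≤ cD D i :=
  Finset.card_pos.2 ⟨i, Finset.mem_filter.2 ⟨h, le_rfl⟩⟩

lemma cD_mono (D : Finset ℕ) {i j : ℕ} (h : i ≤ j) : cD D i ≤ cD D j :=
  Finset.card_le_card (fun x hx => by
    rcases Finset.mem_filter.1 hx with ⟨h1, h2⟩
    exact Finset.mem_filter.2 ⟨h1, le_trans h2 h⟩)

lemma cD_strict (D : Finset ℕ) {i j : ℕ} (hij : i < j) (hj : j ∈ D) : cD D i < cD D j := by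
  apply Finset.card_lt_card
  refine (Finset.ssubset_iff_of_subset (fun x hx => ?_)).2 ⟨j, ?_, ?_⟩
  · rcases Finset.mem_filter.1 hx with ⟨h1, h2⟩
    exact Finset.mem_filter.2 ⟨h1, le_trans h2 (le_of_lt hij)⟩
  · exact Finset.mem_filter.2 ⟨hj, le_rfl⟩
  · intro hmem
    exact absurd ((Finset.mem_filter.1 hmem).2) (by omega)

lemma cD_gap (D : Finset ℕ) {i j : ℕ} (hij : i ≤ j) : cD D j ≤ cD D i + (j - i) := by
  have hsub : D.filter (fun d => d ≤ j) ⊆ D.filter (fun d => d ≤ i) ∪ Finset.Ioc i j := by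
    intro x hx
    rcases Finset.mem_filter.1 hx with ⟨h1, h2⟩
    rcases le_or_gt x i with h | h
    · exact Finset.mem_union_left _ (Finset.mem_filter.2 ⟨h1, h⟩)
    · exact Finset.mem_union_right _ (Finset.mem_Ioc.2 ⟨h, h2⟩)
  calc cD D j ≤ (D.filter (fun d => d ≤ i) ∪ Finset.Ioc i j).card :=
        Finset.card_le_card hsub
    _ ≤ cD D i + (Finset.Ioc i j).card := Finset.card_union_le _ _
    _ = cD D i + (j - i) := by rw [Nat.card_Ioc]

lemma one_le_rD {D : Finset ℕ} (h0 : 0 ∉ D) (i : ℕ) : 1 ≤ rD D i :=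
  Finset.card_pos.2 ⟨0, Finset.mem_filter.2 ⟨Finset.mem_range.2 (Nat.succ_pos i), h0⟩⟩

lemma rD_strict (D : Finset ℕ) {i j : ℕ} (hij : i < j) (hj : j ∉ D) : rD D i < rD D j := by
  apply Finset.card_lt_card
  refine (Finset.ssubset_iff_of_subset (fun x hx => ?_)).2 ⟨j, ?_, ?_⟩
  · rcases Finset.mem_filter.1 hx with ⟨h1, h2⟩
    have := Finset.mem_range.1 h1
    exact Finset.mem_filter.2 ⟨Finset.mem_range.2 (by omega), h2⟩
  · exact Finset.mem_filter.2 ⟨Finset.mem_range.2 (by omega), hj⟩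
  · intro hmem
    have := Finset.mem_range.1 (Finset.mem_filter.1 hmem).1
    omega

lemma rD_add_cD (D : Finset ℕ) (i : ℕ) : rD D i + cD D i = i + 1 := by
  have h1 := Finset.card_filter_add_card_filter_not (s := Finset.range (i + 1))
    (p := fun x => x ∉ D)
  have h2 : (Finset.range (i + 1)).filter (fun x => ¬ x ∉ D) = D.filter (fun d => d ≤ i) := by
    ext x
    simp [Nat.lt_succ_iff, and_comm]
  rw [h2] at h1
  simpa [rD, cD, Finset.card_range] using h1

lemma cD_le_self {D : Finset ℕ} (hpos : ∀ d ∈ D, 0 < d) (k : ℕ) : cD D k ≤ k := by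
  have hsub : D.filter (fun d => d ≤ k) ⊆ Finset.Icc 1 k := by
    intro x hx
    rcases Finset.mem_filter.1 hx with ⟨h1, h2⟩
    exact Finset.mem_Icc.2 ⟨hpos x h1, h2⟩
  have := Finset.card_le_card hsub
  simpa [cD, Nat.card_Icc] using this

/-- The image of `τ_M(σ)` on `{0,…,k}` is the interval `[t, t+k]` where `t` is the
number of descents of `σ` that are `> k`. -/
lemma tauM_image_eq {n : ℕ} (σ : Equiv.Perm (Fin n)) (k : ℕ) :
    (Finset.range (k + 1)).image (Paper.tauM σ) =
      Finset.Icc (((Paper.Des σ).filter fun d => k < d).card)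
        (((Paper.Des σ).filter fun d => k < d).card + k) := by
  have hzero : (0 : ℕ) ∉ Paper.Des σ := by simp [Paper.Des]
  have hpos : ∀ d ∈ Paper.Des σ, 0 < d := fun d hd =>
    (Finset.mem_Ioo.1 (Finset.mem_filter.1 hd).1).1
  have hat : cD (Paper.Des σ) k + ((Paper.Des σ).filter fun d => k < d).card
      = (Paper.Des σ).card := by
    have h1 := Finset.card_filter_add_card_filter_not (s := Paper.Des σ)
      (p := fun d => d ≤ k)
    have h2 : (Paper.Des σ).filter (fun d => ¬ d ≤ k) =
        (Paper.Des σ).filter (fun d => k < d) := by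
      ext x; simp [Nat.not_le]
    rw [h2] at h1
    exact h1
  have hak : cD (Paper.Des σ) k ≤ k := cD_le_self hpos k
  have hinj : ∀ i j : ℕ, i < j → Paper.tauM σ i ≠ Paper.tauM σ j := by
    intro i j hij
    have hci := cD_le_card (Paper.Des σ) i
    have hcj := cD_le_card (Paper.Des σ) j
    rw [tauM_eq, tauM_eq]
    split_ifs with h1 h2 h2
    · have := cD_strict (Paper.Des σ) hij h2
      have := one_le_cD h1
      omega
    · have := one_le_cD h1
      have := one_le_rD hzero j
      omega
    · have := one_le_cD h2
      have := one_le_rD hzero i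
      omega
    · have := rD_strict (Paper.Des σ) hij h2
      have := one_le_rD hzero i
      omega
  have hsub : (Finset.range (k + 1)).image (Paper.tauM σ) ⊆
      Finset.Icc (((Paper.Des σ).filter fun d => k < d).card)
        (((Paper.Des σ).filter fun d => k < d).card + k) := by
    intro v hv
    rcases Finset.mem_image.1 hv with ⟨i, hi, rfl⟩
    have hik : i ≤ k := Nat.lt_succ_iff.1 (Finset.mem_range.1 hi)
    have hmono := cD_mono (Paper.Des σ) hik
    have hgap := cD_gap (Paper.Des σ) hik
    have hrc := rD_add_cD (Paper.Des σ) i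
    have hr1 := one_le_rD hzero i
    rw [Finset.mem_Icc, tauM_eq]
    split_ifs with h1
    · have := one_le_cD h1
      omega
    · omega
  apply Finset.eq_of_subset_of_card_le hsub
  have hinjOn : Set.InjOn (Paper.tauM σ) ↑(Finset.range (k + 1)) := by
    intro x _ y _ hxy
    by_contra hne
    rcases Nat.lt_or_ge x y with h | h
    · exact hinj x y h hxy
    · exact hinj y x (by omega) hxy.symm
  rw [Finset.card_image_of_injOn hinjOn, Finset.card_range, Nat.card_Icc]
  omega

end TauMAux

/-- Stability of `τ_M` under single insertion: if `βi = 1⧢_k β`, then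
`{τ_M(βi)(i) | 0 ≤ i ≤ k} = {τ_M(β)(i) | 0 ≤ i ≤ k}`. -/
theorem tauM_stable_single_insertion (n : ℕ) (β : Equiv.Perm (Fin n)) (k : ℕ) (hk : k ≤ n)
    (βi : Equiv.Perm (Fin (n + 1)))
    (hlt : ∀ (j : Fin (n + 1)) (hj : (j : ℕ) < k),
      (βi j : ℕ) = (β ⟨(j : ℕ), by omega⟩ : ℕ) + 1)
    (heq : ∀ j : Fin (n + 1), (j : ℕ) = k → (βi j : ℕ) = 0)
    (hgt : ∀ (j : Fin (n + 1)) (hj : k < (j : ℕ)),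
      (βi j : ℕ) = (β ⟨(j : ℕ) - 1, by have := j.isLt; omega⟩ : ℕ) + 1) :
    (Finset.range (k + 1)).image (Paper.tauM βi) =
      (Finset.range (k + 1)).image (Paper.tauM β) := by
  -- word-level description of `βi`
  have w2 : Paper.wrd βi k = 0 := by
    have hk1 : k < n + 1 := by omega
    simp only [Paper.wrd, dif_pos hk1]
    exact heq ⟨k, hk1⟩ rfl
  have w3 : ∀ i : ℕ, k < i → i < n + 1 → Paper.wrd βi i = Paper.wrd β (i - 1) + 1 := by
    intro i h1 h2
    have h3 : i - 1 < n := by omega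
    simp only [Paper.wrd, dif_pos h2, dif_pos h3]
    exact hgt ⟨i, h2⟩ h1
  have hmemβ : ∀ i : ℕ,
      i ∈ Paper.Des β ↔ 0 < i ∧ i < n ∧ Paper.wrd β i < Paper.wrd β (i - 1) := by
    intro i
    simp [Paper.Des, Finset.mem_filter, Finset.mem_Ioo, and_assoc]
  have hmemβi : ∀ i : ℕ,
      i ∈ Paper.Des βi ↔ 0 < i ∧ i < n + 1 ∧ Paper.wrd βi i < Paper.wrd βi (i - 1) := by
    intro i
    simp [Paper.Des, Finset.mem_filter, Finset.mem_Ioo, and_assoc]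
  -- the number of descents beyond position `k` is preserved
  have hcard : ((Paper.Des βi).filter fun d => k < d).card =
      ((Paper.Des β).filter fun d => k < d).card := by
    refine (Finset.card_bij (fun d _ => d + 1) ?_ ?_ ?_).symm
    · intro d hd
      rcases Finset.mem_filter.1 hd with ⟨hdD, hdk⟩
      rcases (hmemβ d).1 hdD with ⟨hd0, hdn, hdw⟩
      show d + 1 ∈ (Paper.Des βi).filter fun d => k < d
      refine Finset.mem_filter.2 ⟨(hmemβi (d + 1)).2 ⟨by omega, by omega, ?_⟩, by omega⟩
      have e1 : Paper.wrd βi (d + 1) = Paper.wrd β d + 1 := by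
        have := w3 (d + 1) (by omega) (by omega)
        simpa using this
      have e2 : Paper.wrd βi d = Paper.wrd β (d - 1) + 1 := w3 d hdk (by omega)
      have e3 : d + 1 - 1 = d := by omega
      rw [e3, e1, e2]
      omega
    · intro a ha b hb h
      have h' : a + 1 = b + 1 := h
      omega
    · intro d' hd'
      rcases Finset.mem_filter.1 hd' with ⟨hdD, hdk⟩
      rcases (hmemβi d').1 hdD with ⟨hd0, hdn, hdw⟩
      have hne : d' ≠ k + 1 := by
        intro hcontra
        rw [hcontra] at hdw
        have e3 : k + 1 - 1 = k := by omega
        rw [e3, w2] at hdw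
        omega
      have hd2 : k + 2 ≤ d' := by omega
      have e1 : Paper.wrd βi d' = Paper.wrd β (d' - 1) + 1 := w3 d' (by omega) hdn
      have e2 : Paper.wrd βi (d' - 1) = Paper.wrd β (d' - 1 - 1) + 1 :=
        w3 (d' - 1) (by omega) (by omega)
      refine ⟨d' - 1, Finset.mem_filter.2 ⟨(hmemβ (d' - 1)).2 ⟨by omega, by omega, ?_⟩,
        by omega⟩, show d' - 1 + 1 = d' by omega⟩
      rw [e1, e2] at hdw
      omega
  rw [TauMAux.tauM_image_eq, TauMAux.tauM_image_eq, hcard]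
end

section
/- If permutations u and v are L-adjacent, then the sorted Lehmer codes of u and v are equal (the Lehmer code of v is a rearrangement of the Lehmer code of u). -/
open Finset

namespace Paper

/-- Two words are L-adjacent if `u = w₁ a w₂ c w₃ b w₄` and `v = w₁ b w₂ a w₃ c w₄` for
letters `a < b < c`, where all letters of `w₂` are greater than `b` and all letters of
`w₃, w₄` are smaller than `b` or greater than `c`. -/
def LAdj (u v : List ℕ) : Prop :=
  ∃ (w1 w2 w3 w4 : List ℕ) (a b c : ℕ), a < b ∧ b < c ∧
    u = w1 ++ [a] ++ w2 ++ [c] ++ w3 ++ [b] ++ w4 ∧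
    v = w1 ++ [b] ++ w2 ++ [a] ++ w3 ++ [c] ++ w4 ∧
    (∀ x ∈ w2, b < x) ∧ (∀ x ∈ w3, x < b ∨ c < x) ∧ (∀ x ∈ w4, x < b ∨ c < x)

/-- The Lehmer code of a word `l`: `c_i = #{ j > i | l_j < l_i }`. -/
def LcW (l : List ℕ) (i : ℕ) : ℕ :=
  ((List.range l.length).filter fun j => decide (i < j ∧ l.getD j 0 < l.getD i 0)).length

end Paper


namespace Paper

lemma countP_range_getD (l : List ℕ) (p : ℕ → Bool) :
    (List.range l.length).countP (fun j => p (l.getD j 0)) = l.countP p := by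
  induction l with
  | nil => simp
  | cons a l ih =>
    rw [List.length_cons, List.range_succ_eq_map, List.countP_cons, List.countP_cons,
      List.countP_map]
    simp only [List.getD_cons_zero, Function.comp_def, Nat.succ_eq_add_one,
      List.getD_cons_succ]
    omega

lemma getD_drop (l : List ℕ) (n j : ℕ) : (l.drop n).getD j 0 = l.getD (n + j) 0 := by
  simp [List.getD_eq_getElem?_getD, List.getElem?_drop]

lemma LcW_eq (l : List ℕ) (i : ℕ) :
    LcW l i = (l.drop (i+1)).countP (fun x => decide (x < l.getD i 0)) := by
  rw [LcW, ← List.countP_eq_length_filter]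
  by_cases h : i < l.length
  · have hlen : l.length = (i+1) + (l.length - (i+1)) := by omega
    rw [hlen, List.range_add, List.countP_append, List.countP_map]
    have h1 : (List.range (i+1)).countP
        (fun j => decide (i < j ∧ l.getD j 0 < l.getD i 0)) = 0 := by
      rw [List.countP_eq_zero]
      intro j hj
      simp only [List.mem_range] at hj
      simp only [decide_eq_true_eq, not_and]
      omega
    have h2 : ∀ j, ((fun j => decide (i < j ∧ l.getD j 0 < l.getD i 0)) ∘
        (fun x => (i+1) + x)) j = (fun j => decide ((l.drop (i+1)).getD j 0 < l.getD i 0)) j := by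
      intro j
      simp only [Function.comp_apply, getD_drop, decide_eq_decide]
      omega
    rw [h1, funext h2]
    have h3 : l.length - (i+1) = (l.drop (i+1)).length := by simp
    rw [h3]
    simpa using countP_range_getD (l.drop (i+1)) fun y => decide (y < l.getD i 0)
  · rw [List.drop_eq_nil_of_le (by omega), List.countP_eq_zero.2, List.countP_nil]
    intro j hj
    simp only [List.mem_range] at hj
    simp only [decide_eq_true_eq, not_and]
    omega

lemma LcW_shift (w t : List ℕ) (k : ℕ) : LcW (w ++ t) (w.length + k) = LcW t k := by
  rw [LcW_eq, LcW_eq, List.getD_append_right _ _ _ _ (by omega),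
    List.drop_append, List.drop_eq_nil_of_le (show w.length ≤ w.length + k + 1 by omega)]
  have : w.length + k - w.length = k := by omega
  have h2 : w.length + k + 1 - w.length = k + 1 := by omega
  rw [this, h2, List.nil_append]

lemma LcW_inside (w t : List ℕ) (k : ℕ) (hk : k < w.length) :
    LcW (w ++ t) k = LcW w k + t.countP (fun x => decide (x < w.getD k 0)) := by
  rw [LcW_eq, LcW_eq, List.getD_append _ _ _ _ hk, List.drop_append,
    List.countP_append]
  have h0 : k + 1 - w.length = 0 := by omega
  rw [h0, List.drop_zero]

lemma swap_perm (x y : ℕ) (L1 L2 L3 : List ℕ) :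
    (L1 ++ x :: (L2 ++ y :: L3)).Perm (L1 ++ y :: (L2 ++ x :: L3)) := by
  refine List.Perm.append_left L1 ?_
  exact ((List.perm_middle).cons x).trans
    (((List.Perm.swap x y (L2 ++ L3)).symm).trans ((List.perm_middle.symm).cons y))

lemma perm_map_range_swap (f g : ℕ → ℕ) {n i j : ℕ} (hij : i < j) (hj : j < n)
    (hfg : ∀ k, k < n → k ≠ i → k ≠ j → f k = g k) (h1 : f i = g j) (h2 : f j = g i) :
    ((List.range n).map f).Perm ((List.range n).map g) := by
  have hn : n = i + 1 + (j - i - 1) + 1 + (n - j - 1) := by omega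
  rw [hn, List.range_add, List.range_add, List.range_add, List.range_add]
  simp only [List.range_succ, List.map_append, List.map_map, List.map_cons, List.map_nil,
    List.range_zero, Function.comp_def]
  have e1 : (List.range i).map f = (List.range i).map g := by
    refine List.map_congr_left fun k hk => ?_
    rw [List.mem_range] at hk
    exact hfg k (by omega) (by omega) (by omega)
  have e2 : (List.range (j - i - 1)).map (fun x => f (i + 1 + x)) =
      (List.range (j - i - 1)).map (fun x => g (i + 1 + x)) := by
    refine List.map_congr_left fun k hk => ?_
    rw [List.mem_range] at hk
    exact hfg _ (by omega) (by omega) (by omega)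
  have e3 : (List.range (n - j - 1)).map (fun x => f (i + 1 + (j - i - 1) + 1 + x)) =
      (List.range (n - j - 1)).map (fun x => g (i + 1 + (j - i - 1) + 1 + x)) := by
    refine List.map_congr_left fun k hk => ?_
    rw [List.mem_range] at hk
    exact hfg _ (by omega) (by omega) (by omega)
  have hAi : i + 0 = i := by omega
  have hAj : i + 1 + (j - i - 1) + 0 = j := by omega
  rw [hAi, hAj, e1, e2, e3, h1, h2]
  have := swap_perm (g j) (g i) ((List.range i).map g)
    ((List.range (j-i-1)).map fun x => g (i+1+x))
    ((List.range (n-j-1)).map fun x => g (i + 1 + (j - i - 1) + 1 + x))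
  simpa using this

lemma LcW_cons_zero (x : ℕ) (t : List ℕ) :
    LcW (x :: t) 0 = t.countP (fun y => decide (y < x)) := by
  rw [LcW_eq]; simp

lemma LcW_at_head (w : List ℕ) (x : ℕ) (t : List ℕ) :
    LcW (w ++ (x :: t)) w.length = t.countP (fun y => decide (y < x)) := by
  have h := LcW_shift w (x :: t) 0
  rw [Nat.add_zero] at h
  rw [h, LcW_cons_zero]

section Regions
variable (w1 w2 w3 w4 : List ℕ) (a b c : ℕ)

lemma regionW1 (k : ℕ) (hk : k < w1.length) :
    LcW (w1 ++ [a] ++ w2 ++ [c] ++ w3 ++ [b] ++ w4) k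
      = LcW (w1 ++ [b] ++ w2 ++ [a] ++ w3 ++ [c] ++ w4) k := by
  have hU : w1 ++ [a] ++ w2 ++ [c] ++ w3 ++ [b] ++ w4
      = w1 ++ (a :: (w2 ++ (c :: (w3 ++ (b :: w4))))) := by simp
  have hV : w1 ++ [b] ++ w2 ++ [a] ++ w3 ++ [c] ++ w4
      = w1 ++ (b :: (w2 ++ (a :: (w3 ++ (c :: w4))))) := by simp
  rw [hU, hV, LcW_inside _ _ _ hk, LcW_inside _ _ _ hk]
  congr 1
  simp only [List.countP_append, List.countP_cons]
  omega

lemma regionW2 (hab : a < b) (hw2 : ∀ x ∈ w2, b < x) (k : ℕ) (hk : k < w2.length) :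
    LcW (w1 ++ [a] ++ w2 ++ [c] ++ w3 ++ [b] ++ w4) (w1.length + 1 + k)
      = LcW (w1 ++ [b] ++ w2 ++ [a] ++ w3 ++ [c] ++ w4) (w1.length + 1 + k) := by
  have hU : w1 ++ [a] ++ w2 ++ [c] ++ w3 ++ [b] ++ w4
      = (w1 ++ [a]) ++ (w2 ++ (c :: (w3 ++ (b :: w4)))) := by simp
  have hV : w1 ++ [b] ++ w2 ++ [a] ++ w3 ++ [c] ++ w4
      = (w1 ++ [b]) ++ (w2 ++ (a :: (w3 ++ (c :: w4)))) := by simp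
  have hl : w1.length + 1 + k = (w1 ++ [a]).length + k := by simp
  have hl' : w1.length + 1 + k = (w1 ++ [b]).length + k := by simp
  rw [hU, hV]
  rw [show LcW ((w1 ++ [a]) ++ (w2 ++ (c :: (w3 ++ (b :: w4))))) (w1.length + 1 + k)
      = LcW (w2 ++ (c :: (w3 ++ (b :: w4)))) k from hl ▸ LcW_shift _ _ k,
    show LcW ((w1 ++ [b]) ++ (w2 ++ (a :: (w3 ++ (c :: w4))))) (w1.length + 1 + k)
      = LcW (w2 ++ (a :: (w3 ++ (c :: w4)))) k from hl' ▸ LcW_shift _ _ k]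
  rw [LcW_inside _ _ _ hk, LcW_inside _ _ _ hk]
  congr 1
  set x := w2.getD k 0 with hxdef
  have hx : x ∈ w2 := by
    rw [hxdef, List.getD_eq_getElem _ _ hk]; exact List.getElem_mem _
  have hbx : decide (b < x) = true := decide_eq_true (hw2 x hx)
  have hax : decide (a < x) = true := decide_eq_true (lt_trans hab (hw2 x hx))
  simp only [List.countP_append, List.countP_cons, hbx, hax, if_true]
  omega

lemma regionW3 (hbc : b < c) (hw3 : ∀ x ∈ w3, x < b ∨ c < x) (k : ℕ) (hk : k < w3.length) :
    LcW (w1 ++ [a] ++ w2 ++ [c] ++ w3 ++ [b] ++ w4) (w1.length + w2.length + 2 + k)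
      = LcW (w1 ++ [b] ++ w2 ++ [a] ++ w3 ++ [c] ++ w4) (w1.length + w2.length + 2 + k) := by
  have hU : w1 ++ [a] ++ w2 ++ [c] ++ w3 ++ [b] ++ w4
      = (w1 ++ [a] ++ w2 ++ [c]) ++ (w3 ++ (b :: w4)) := by simp
  have hV : w1 ++ [b] ++ w2 ++ [a] ++ w3 ++ [c] ++ w4
      = (w1 ++ [b] ++ w2 ++ [a]) ++ (w3 ++ (c :: w4)) := by simp
  have hl : w1.length + w2.length + 2 + k = (w1 ++ [a] ++ w2 ++ [c]).length + k := by
    simp; omega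
  have hl' : w1.length + w2.length + 2 + k = (w1 ++ [b] ++ w2 ++ [a]).length + k := by
    simp; omega
  rw [hU, hV,
    show LcW ((w1 ++ [a] ++ w2 ++ [c]) ++ (w3 ++ (b :: w4))) (w1.length + w2.length + 2 + k)
      = LcW (w3 ++ (b :: w4)) k from hl ▸ LcW_shift _ _ k,
    show LcW ((w1 ++ [b] ++ w2 ++ [a]) ++ (w3 ++ (c :: w4))) (w1.length + w2.length + 2 + k)
      = LcW (w3 ++ (c :: w4)) k from hl' ▸ LcW_shift _ _ k,
    LcW_inside _ _ _ hk, LcW_inside _ _ _ hk]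
  congr 1
  set x := w3.getD k 0 with hxdef
  have hx : x ∈ w3 := by
    rw [hxdef, List.getD_eq_getElem _ _ hk]; exact List.getElem_mem _
  have : decide (b < x) = decide (c < x) := by
    rw [decide_eq_decide]
    rcases hw3 x hx with h | h <;> constructor <;> intro <;> omega
  simp only [List.countP_cons, this]

lemma regionW4 (k : ℕ) :
    LcW (w1 ++ [a] ++ w2 ++ [c] ++ w3 ++ [b] ++ w4)
        (w1.length + w2.length + w3.length + 3 + k)
      = LcW (w1 ++ [b] ++ w2 ++ [a] ++ w3 ++ [c] ++ w4)
        (w1.length + w2.length + w3.length + 3 + k) := by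
  have hU : w1 ++ [a] ++ w2 ++ [c] ++ w3 ++ [b] ++ w4
      = (w1 ++ [a] ++ w2 ++ [c] ++ w3 ++ [b]) ++ w4 := by simp
  have hV : w1 ++ [b] ++ w2 ++ [a] ++ w3 ++ [c] ++ w4
      = (w1 ++ [b] ++ w2 ++ [a] ++ w3 ++ [c]) ++ w4 := by simp
  have hl : w1.length + w2.length + w3.length + 3 + k
      = (w1 ++ [a] ++ w2 ++ [c] ++ w3 ++ [b]).length + k := by simp; omega
  have hl' : w1.length + w2.length + w3.length + 3 + k
      = (w1 ++ [b] ++ w2 ++ [a] ++ w3 ++ [c]).length + k := by simp; omega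
  rw [hU, hV,
    show LcW ((w1 ++ [a] ++ w2 ++ [c] ++ w3 ++ [b]) ++ w4)
        (w1.length + w2.length + w3.length + 3 + k) = LcW w4 k from hl ▸ LcW_shift _ _ k,
    show LcW ((w1 ++ [b] ++ w2 ++ [a] ++ w3 ++ [c]) ++ w4)
        (w1.length + w2.length + w3.length + 3 + k) = LcW w4 k from hl' ▸ LcW_shift _ _ k]

end Regions

section Pivots
variable (w1 w2 w3 w4 : List ℕ) (a b c : ℕ)

lemma pivotA (hab : a < b) (hbc : b < c) (hw2 : ∀ x ∈ w2, b < x) :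
    LcW (w1 ++ [a] ++ w2 ++ [c] ++ w3 ++ [b] ++ w4) w1.length
      = LcW (w1 ++ [b] ++ w2 ++ [a] ++ w3 ++ [c] ++ w4)
          (w1.length + w2.length + 1) := by
  have hU : w1 ++ [a] ++ w2 ++ [c] ++ w3 ++ [b] ++ w4
      = w1 ++ (a :: (w2 ++ (c :: (w3 ++ (b :: w4))))) := by simp
  have hV : w1 ++ [b] ++ w2 ++ [a] ++ w3 ++ [c] ++ w4
      = (w1 ++ b :: w2) ++ (a :: (w3 ++ (c :: w4))) := by simp
  have hl : w1.length + w2.length + 1 = (w1 ++ b :: w2).length := by simp; omega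
  rw [hU, hV, hl, LcW_at_head, LcW_at_head]
  have h2 : w2.countP (fun y => decide (y < a)) = 0 := by
    rw [List.countP_eq_zero]
    intro x hx
    have := hw2 x hx
    simp only [decide_eq_true_eq]
    omega
  have hca : decide (c < a) = false := by simp only [decide_eq_false_iff_not]; omega
  have hba : decide (b < a) = false := by simp only [decide_eq_false_iff_not]; omega
  simp only [List.countP_append, List.countP_cons, h2, hca, hba, Bool.false_eq_true,
    if_false]
  omega

lemma pivotB (hab : a < b) (hbc : b < c) (hw2 : ∀ x ∈ w2, b < x)
    (hw3 : ∀ x ∈ w3, x < b ∨ c < x) (hw4 : ∀ x ∈ w4, x < b ∨ c < x) :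
    LcW (w1 ++ [a] ++ w2 ++ [c] ++ w3 ++ [b] ++ w4) (w1.length + w2.length + 1)
      = LcW (w1 ++ [b] ++ w2 ++ [a] ++ w3 ++ [c] ++ w4) w1.length := by
  have hU : w1 ++ [a] ++ w2 ++ [c] ++ w3 ++ [b] ++ w4
      = (w1 ++ a :: w2) ++ (c :: (w3 ++ (b :: w4))) := by simp
  have hV : w1 ++ [b] ++ w2 ++ [a] ++ w3 ++ [c] ++ w4
      = w1 ++ (b :: (w2 ++ (a :: (w3 ++ (c :: w4))))) := by simp
  have hl : w1.length + w2.length + 1 = (w1 ++ a :: w2).length := by simp; omega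
  rw [hU, hV, hl, LcW_at_head, LcW_at_head]
  have h2 : w2.countP (fun y => decide (y < b)) = 0 := by
    rw [List.countP_eq_zero]
    intro x hx
    have := hw2 x hx
    simp only [decide_eq_true_eq]
    omega
  have h3 : w3.countP (fun y => decide (y < c)) = w3.countP (fun y => decide (y < b)) := by
    refine List.countP_congr fun x hx => ?_
    simp only [decide_eq_true_eq]
    rcases hw3 x hx with h | h <;> constructor <;> intro <;> omega
  have h4 : w4.countP (fun y => decide (y < c)) = w4.countP (fun y => decide (y < b)) := by
    refine List.countP_congr fun x hx => ?_
    simp only [decide_eq_true_eq]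
    rcases hw4 x hx with h | h <;> constructor <;> intro <;> omega
  have hbc' : decide (b < c) = true := decide_eq_true hbc
  have hab' : decide (a < b) = true := decide_eq_true hab
  have hcb : decide (c < b) = false := by simp only [decide_eq_false_iff_not]; omega
  simp only [List.countP_append, List.countP_cons, h2, h3, h4, hbc', hab', hcb,
    Bool.false_eq_true, if_true, if_false]
  omega

lemma pivotC (hbc : b < c) (hw4 : ∀ x ∈ w4, x < b ∨ c < x) :
    LcW (w1 ++ [a] ++ w2 ++ [c] ++ w3 ++ [b] ++ w4)
        (w1.length + w2.length + w3.length + 2)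
      = LcW (w1 ++ [b] ++ w2 ++ [a] ++ w3 ++ [c] ++ w4)
        (w1.length + w2.length + w3.length + 2) := by
  have hU : w1 ++ [a] ++ w2 ++ [c] ++ w3 ++ [b] ++ w4
      = (w1 ++ [a] ++ w2 ++ [c] ++ w3) ++ (b :: w4) := by simp
  have hV : w1 ++ [b] ++ w2 ++ [a] ++ w3 ++ [c] ++ w4
      = (w1 ++ [b] ++ w2 ++ [a] ++ w3) ++ (c :: w4) := by simp
  have hl : w1.length + w2.length + w3.length + 2
      = (w1 ++ [a] ++ w2 ++ [c] ++ w3).length := by simp; omega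
  rw [hU, hV, show (w1.length + w2.length + w3.length + 2) = _ from hl, LcW_at_head]
  have hlen2 : ((w1 ++ [a] ++ w2 ++ [c] ++ w3).length)
      = (w1 ++ [b] ++ w2 ++ [a] ++ w3).length := by
    simp only [List.length_append, List.length_cons]
  rw [hlen2, LcW_at_head]
  refine List.countP_congr fun x hx => ?_
  simp only [decide_eq_true_eq]
  rcases hw4 x hx with h | h <;> constructor <;> intro <;> omega

end Pivots

end Paper

/-- If `u` and `v` are L-adjacent words, then the Lehmer code of `v` is a rearrangement of
the Lehmer code of `u`; in particular their sorted Lehmer codes are equal. -/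
theorem LAdj_sorted_lehmer_code_eq (u v : List ℕ) (h : Paper.LAdj u v) :
    ((List.range u.length).map (Paper.LcW u)).Perm
      ((List.range v.length).map (Paper.LcW v)) := by
  obtain ⟨w1, w2, w3, w4, a, b, c, hab, hbc, hu, hv, hw2, hw3, hw4⟩ := h
  subst hu hv
  have hlen : (w1 ++ [b] ++ w2 ++ [a] ++ w3 ++ [c] ++ w4).length
      = (w1 ++ [a] ++ w2 ++ [c] ++ w3 ++ [b] ++ w4).length := by
    simp only [List.length_append, List.length_cons]
  rw [hlen]
  refine Paper.perm_map_range_swap _ _ (i := w1.length) (j := w1.length + w2.length + 1)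
    (by omega) (by simp only [List.length_append, List.length_cons]; omega) ?_ ?_ ?_
  · intro k hk hki hkj
    have hkn : k < w1.length + w2.length + w3.length + w4.length + 3 := by
      have := hk
      simp only [List.length_append, List.length_cons, List.length_nil] at this
      omega
    rcases Nat.lt_or_ge k w1.length with h1 | h1
    · exact Paper.regionW1 w1 w2 w3 w4 a b c k h1
    rcases Nat.lt_or_ge k (w1.length + w2.length + 1) with h2 | h2
    · obtain ⟨t, ht, rfl⟩ : ∃ t, t < w2.length ∧ k = w1.length + 1 + t :=
        ⟨k - w1.length - 1, by omega, by omega⟩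
      exact Paper.regionW2 w1 w2 w3 w4 a b c hab hw2 t ht
    rcases Nat.lt_or_ge k (w1.length + w2.length + w3.length + 2) with h3 | h3
    · obtain ⟨t, ht, rfl⟩ : ∃ t, t < w3.length ∧ k = w1.length + w2.length + 2 + t :=
        ⟨k - w1.length - w2.length - 2, by omega, by omega⟩
      exact Paper.regionW3 w1 w2 w3 w4 a b c hbc hw3 t ht
    rcases Nat.lt_or_ge k (w1.length + w2.length + w3.length + 3) with h4 | h4
    · have hk' : k = w1.length + w2.length + w3.length + 2 := by omega
      subst hk'
      exact Paper.pivotC w1 w2 w3 w4 a b c hbc hw4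
    · obtain ⟨t, rfl⟩ : ∃ t, k = w1.length + w2.length + w3.length + 3 + t :=
        ⟨k - w1.length - w2.length - w3.length - 3, by omega⟩
      exact Paper.regionW4 w1 w2 w3 w4 a b c t
  · exact Paper.pivotA w1 w2 w3 w4 a b c hab hbc hw2
  · exact Paper.pivotB w1 w2 w3 w4 a b c hab hbc hw2 hw3 hw4
end
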